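/- (Lemma 1: Fisher information for g-modeling.) Let P be a real n×m matrix with nonnegative entries each of whose columns sums to 1, let Q be a real m×q matrix, let g(α) = e^{Qα − 1_m φ(α)} with φ(α) = log Σ_j e^{Q_j α} be the exponential family prior, and suppose the marginal f(α) = P g(α) has all components positive. Let y be the multinomial count vector from N i.i.d. categorical draws with distribution f(α), and define the score vector s = Q_α' P' diag(1/f(α)) y ∈ ℝ^q, where Q_α = (diag(g(α)) − g(α) g(α)') Q. Then the covariance matrix of s equals I = N Q_α' P' diag(1/f(α)) P Q_α; that is, for all 1 ≤ k, l ≤ q, Cov(s_k, s_l) = N (Q_α' P' diag(1/f(α)) P Q_α)_{kl}. -/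

import Mathlib

open MeasureTheory ProbabilityTheory Matrix

lemma fin_integral {Ω : Type*} [MeasurableSpace Ω] (μ : Measure Ω) [IsFiniteMeasure μ]
    {ι : Type*} [Fintype ι] [MeasurableSpace ι] [MeasurableSingletonClass ι]
    (X : Ω → ι) (hX : Measurable X) (φ : ι → ℝ) :
    Integrable (fun ω => φ (X ω)) μ ∧
    ∫ ω, φ (X ω) ∂μ = ∑ i, φ i * (μ {ω | X ω = i}).toReal := by
  have hmeasS : ∀ i : ι, MeasurableSet {ω | X ω = i} := fun i =>
    hX (measurableSet_singleton i)
  have heq : (fun ω => φ (X ω)) =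
      fun ω => ∑ i, Set.indicator {ω' | X ω' = i} (fun _ => φ i) ω := by
    funext ω
    rw [Finset.sum_eq_single (X ω)]
    · simp [Set.indicator]
    · intro i _ hi
      rw [Set.indicator_of_notMem]
      simp only [Set.mem_setOf_eq]
      exact fun h => hi h.symm
    · simp
  constructor
  · rw [heq]
    refine integrable_finset_sum _ (fun i _ => ?_)
    exact (integrable_const (φ i)).indicator (hmeasS i)
  · rw [heq, integral_finset_sum _ (fun i _ => (integrable_const (φ i)).indicator (hmeasS i))]
    refine Finset.sum_congr rfl (fun i _ => ?_)
    rw [integral_indicator_const _ (hmeasS i), smul_eq_mul, mul_comm]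
    rfl


/-- Lemma 1 (Fisher information for g-modeling): with the exponential family prior
`g(α) = exp(Qα − 1φ(α))`, marginal `f(α) = P g(α)` (all components positive), and `y`
the multinomial count vector of `N` i.i.d. draws from `f(α)`, the score vector
`s = Q_α' P' diag(1/f(α)) y` has covariance matrix
`I = N Q_α' P' diag(1/f(α)) P Q_α`, where `Q_α = (diag(g(α)) − g(α)g(α)')Q`. -/
theorem stmt14 {Ω : Type*} [MeasurableSpace Ω] (μ : Measure Ω) [IsProbabilityMeasure μ]
    {n m q N : ℕ} (P : Matrix (Fin n) (Fin m) ℝ)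
    (hP0 : ∀ i j, 0 ≤ P i j) (hP1 : ∀ j, ∑ i, P i j = 1)
    (Q : Matrix (Fin m) (Fin q) ℝ) (α : Fin q → ℝ)
    (g : Fin m → ℝ)
    (hg : ∀ j, g j = Real.exp ((∑ k, Q j k * α k)
      - Real.log (∑ l, Real.exp (∑ k, Q l k * α k))))
    (f : Fin n → ℝ) (hf : f = P.mulVec g) (hfpos : ∀ i, 0 < f i)
    (Qα : Matrix (Fin m) (Fin q) ℝ)
    (hQα : Qα = (Matrix.diagonal g - Matrix.of (fun j j' => g j * g j')) * Q)
    (I : Fin N → Ω → Fin n) (hmeas : ∀ k, Measurable (I k))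
    (hdist : ∀ k i, (μ {ω | I k ω = i}).toReal = f i)
    (hindep : iIndepFun I μ)
    (y : Fin n → Ω → ℕ)
    (hy : ∀ i ω, y i ω = (Finset.univ.filter (fun k => I k ω = i)).card)
    (s : Fin q → Ω → ℝ)
    (hs : ∀ k ω, s k ω
      = ∑ i, (Qαᵀ * Pᵀ * Matrix.diagonal (fun i' => (f i')⁻¹)) k i * (y i ω : ℝ)) :
    ∀ k l, ∫ ω, (s k ω - ∫ ω', s k ω' ∂μ) * (s l ω - ∫ ω', s l ω' ∂μ) ∂μ
      = N * (Qαᵀ * Pᵀ * Matrix.diagonal (fun i => (f i)⁻¹) * P * Qα) k l := by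
  set A : Matrix (Fin q) (Fin n) ℝ := Qαᵀ * Pᵀ * Matrix.diagonal (fun i => (f i)⁻¹) with hA
  -- entries of A times f
  have hAf : ∀ k i, A k i * f i = ∑ j, Qα j k * P i j := by
    intro k i
    rw [hA, Matrix.mul_diagonal, mul_assoc, inv_mul_cancel₀ (hfpos i).ne', mul_one,
      Matrix.mul_apply]
    simp [Matrix.transpose_apply]
  have hAf2 : ∀ k i, A k i * f i = (P * Qα) i k := by
    intro k i
    rw [hAf, Matrix.mul_apply]
    exact Finset.sum_congr rfl (fun j _ => mul_comm _ _)
  -- the mean of each score component is zero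
  have hc : ∀ k, ∑ i, A k i * f i = 0 := by
    intro k
    rcases Nat.eq_zero_or_pos n with hn | hn
    · subst hn; simp
    · have hm : 0 < m := by
        rcases Nat.eq_zero_or_pos m with h0 | h0
        · exfalso
          subst h0
          have h2 := hfpos ⟨0, hn⟩
          rw [hf] at h2
          simp [Matrix.mulVec, dotProduct] at h2
        · exact h0
      have : Nonempty (Fin m) := Fin.pos_iff_nonempty.mp hm
      have hT : (0:ℝ) < ∑ l, Real.exp (∑ k, Q l k * α k) :=
        Finset.sum_pos (fun _ _ => Real.exp_pos _) Finset.univ_nonempty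
      have hgsum : ∑ j, g j = 1 := by
        have hgj : ∀ j, g j
            = Real.exp (∑ k, Q j k * α k) / (∑ l, Real.exp (∑ k, Q l k * α k)) := by
          intro j
          rw [hg j, Real.exp_sub, Real.exp_log hT]
        simp_rw [hgj]
        rw [← Finset.sum_div, div_self hT.ne']
      have hQαsum : ∑ j, Qα j k = 0 := by
        have hent : ∀ j, Qα j k = g j * Q j k - g j * ∑ j', g j' * Q j' k := by
          intro j
          rw [hQα, Matrix.mul_apply]
          simp only [Matrix.sub_apply, Matrix.diagonal_apply, Matrix.of_apply, sub_mul,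
            ite_mul, zero_mul]
          rw [Finset.sum_sub_distrib, Finset.sum_ite_eq, if_pos (Finset.mem_univ j),
            Finset.mul_sum]
          simp [mul_assoc]
        simp_rw [hent]
        rw [Finset.sum_sub_distrib, ← Finset.sum_mul, hgsum, one_mul, sub_self]
      simp_rw [hAf]
      rw [Finset.sum_comm]
      simp_rw [← Finset.mul_sum]
      rw [Finset.sum_congr rfl (fun j _ => by rw [hP1 j, mul_one])]
      exact hQαsum
  -- representation of the score as a sum over draws
  have hsrep : ∀ k ω, s k ω = ∑ t : Fin N, A k (I t ω) := by
    intro k ω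
    rw [hs]
    rw [← Finset.sum_fiberwise Finset.univ (fun t => I t ω) (fun t => A k (I t ω))]
    refine Finset.sum_congr rfl (fun i _ => ?_)
    have h1 : ∑ t ∈ Finset.univ.filter (fun t => I t ω = i), A k (I t ω)
        = ∑ t ∈ Finset.univ.filter (fun t => I t ω = i), A k i :=
      Finset.sum_congr rfl (fun t ht => by rw [(Finset.mem_filter.mp ht).2])
    rw [h1, Finset.sum_const, nsmul_eq_mul, hy, mul_comm]
  -- expectations
  have hE1 : ∀ (t : Fin N) (φ : Fin n → ℝ), ∫ ω, φ (I t ω) ∂μ = ∑ i, φ i * f i := by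
    intro t φ
    rw [(fin_integral μ (I t) (hmeas t) φ).2]
    simp_rw [hdist]
  have hEt0 : ∀ (t : Fin N) (k : Fin q), ∫ ω, A k (I t ω) ∂μ = 0 := by
    intro t k
    rw [hE1 t (A k)]
    exact hc k
  have hEs : ∀ k, ∫ ω, s k ω ∂μ = 0 := by
    intro k
    simp_rw [hsrep]
    rw [integral_finset_sum _ (fun t _ => (fin_integral μ (I t) (hmeas t) (A k)).1)]
    simp [hEt0]
  intro k l
  rw [hEs k, hEs l]
  simp only [sub_zero]
  -- integrability of products
  have hint : ∀ t u : Fin N, Integrable (fun ω => A k (I t ω) * A l (I u ω)) μ :=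
    fun t u => (fin_integral μ (fun ω => (I t ω, I u ω))
      ((hmeas t).prodMk (hmeas u)) (fun p => A k p.1 * A l p.2)).1
  have hval : ∀ t u : Fin N, ∫ ω, A k (I t ω) * A l (I u ω) ∂μ
      = if t = u then ∑ i, A k i * A l i * f i else 0 := by
    intro t u
    by_cases htu : t = u
    · subst htu
      rw [if_pos rfl]
      have := hE1 t (fun i => A k i * A l i)
      simpa using this
    · rw [if_neg htu]
      have hind : IndepFun (fun ω => A k (I t ω)) (fun ω => A l (I u ω)) μ :=
        (hindep.indepFun htu).comp (measurable_of_finite (A k)) (measurable_of_finite (A l))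
      have h1 := (fin_integral μ (I t) (hmeas t) (A k)).1
      have h2 := (fin_integral μ (I u) (hmeas u) (A l)).1
      have hm2 : ∫ ω, A k (I t ω) * A l (I u ω) ∂μ
          = (∫ ω, A k (I t ω) ∂μ) * ∫ ω, A l (I u ω) ∂μ :=
        hind.integral_mul_eq_mul_integral h1.aestronglyMeasurable h2.aestronglyMeasurable
      rw [hm2, hEt0 t k, zero_mul]
  have hsplit : ∫ ω, s k ω * s l ω ∂μ
      = ∑ t : Fin N, ∑ u : Fin N, ∫ ω, A k (I t ω) * A l (I u ω) ∂μ := by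
    have hprod : ∀ ω, s k ω * s l ω
        = ∑ t : Fin N, ∑ u : Fin N, A k (I t ω) * A l (I u ω) := by
      intro ω
      rw [hsrep, hsrep, Finset.sum_mul_sum]
    simp_rw [hprod]
    rw [integral_finset_sum _ (fun t _ => integrable_finset_sum _ (fun u _ => hint t u))]
    exact Finset.sum_congr rfl (fun t _ => integral_finset_sum _ (fun u _ => hint t u))
  rw [hsplit]
  simp_rw [hval]
  rw [Finset.sum_congr rfl (fun t _ => Finset.sum_ite_eq Finset.univ t
    (fun _ => ∑ i, A k i * A l i * f i))]
  simp only [Finset.mem_univ, if_pos, Finset.sum_const, Finset.card_univ, Fintype.card_fin,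
    nsmul_eq_mul]
  congr 1
  rw [Matrix.mul_assoc, Matrix.mul_apply]
  refine Finset.sum_congr rfl (fun i _ => ?_)
  rw [mul_assoc, hAf2 l i]
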